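/- Let u be a partial transformation of a finite set Ω with rank r, and let g be a permutation of Ω such that rank(u∘g∘u) = rank(u). Then for every positive integer m, rank((u∘g)^m) = rank(u). -/

import Mathlib

variable {Ω : Type*} [Fintype Ω] [DecidableEq Ω]

/-- A partial transformation of `Ω`, encoded as a function `Ω → Option Ω`. -/
def PT (Ω : Type*) := Ω → Option Ω

/-- Composition of partial transformations: apply `f` first, then `g`. -/
def pcomp (f g : PT Ω) : PT Ω := fun x => (f x).bind g

/-- A permutation viewed as a (total) partial transformation. -/
def ofPerm (g : Equiv.Perm Ω) : PT Ω := fun x => some (g x)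

/-- The rank of a partial transformation: the cardinality of its image. -/
noncomputable def rank (u : PT Ω) : ℕ := {y : Ω | ∃ x : Ω, u x = some y}.ncard

/-- The domain of a partial transformation. -/
def dom (u : PT Ω) : Set Ω := {x : Ω | u x ≠ none}

/-- Membership in the subsemigroup of `PT Ω` generated by a set `S`. -/
inductive InGen (S : Set (PT Ω)) : PT Ω → Prop
  | base {s : PT Ω} : s ∈ S → InGen S s
  | mul {a b : PT Ω} : InGen S a → InGen S b → InGen S (pcomp a b)

/-- The generating set consisting of the permutations of `G` together with `t`. -/
def gens (G : Subgroup (Equiv.Perm Ω)) (t : PT Ω) : Set (PT Ω) :=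
  {f : PT Ω | (∃ g ∈ G, f = ofPerm g) ∨ f = t}

/-- `ppow f m` is the `m`-th power of `f` under `pcomp` (with `ppow f 0` the identity). -/
def ppow (f : PT Ω) : ℕ → PT Ω
  | 0 => fun x => some x
  | (m + 1) => pcomp (ppow f m) f

theorem rank_pow_eq (u : PT Ω) (g : Equiv.Perm Ω)
    (h : rank (pcomp (pcomp u (ofPerm g)) u) = rank u) :
    ∀ m : ℕ, 1 ≤ m → rank (ppow (pcomp u (ofPerm g)) m) = rank u := by
  have hb : ∀ (x : Option Ω) (f : PT Ω) (b : Ω), x.bind f = some b ↔ ∃ a, x = some a ∧ f a = some b :=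
    fun _ _ _ => Option.bind_eq_some_iff
  set f := pcomp u (ofPerm g) with hf
  set I : Set Ω := {y | ∃ x, u x = some y} with hI
  set S : Set Ω := {y | ∃ x, f x = some y} with hS
  set U : Set Ω := {y | ∃ s ∈ S, u s = some y} with hU
  have hSg : S = g '' I := by
    ext y
    constructor
    · rintro ⟨x, hx⟩
      rw [hf] at hx
      simp only [pcomp, ofPerm, hb] at hx
      obtain ⟨a, ha, ha2⟩ := hx
      exact ⟨a, ⟨x, ha⟩, Option.some_injective _ ha2⟩
    · rintro ⟨a, ⟨x, hx⟩, rfl⟩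
      exact ⟨x, by simp [hf, pcomp, ofPerm, hx]; rfl⟩
  have hSI : S.ncard = I.ncard := by
    rw [hSg, Set.ncard_image_of_injective _ g.injective]
  have hUI : U ⊆ I := by rintro y ⟨s, _, hs⟩; exact ⟨s, hs⟩
  have hUrank : rank (pcomp f u) = U.ncard := by
    have hset : {y : Ω | ∃ x, pcomp f u x = some y} = U := by
      ext y
      simp only [hU, Set.mem_setOf_eq, pcomp, hb, hS]
      constructor
      · rintro ⟨x, s, hxs, hsy⟩; exact ⟨s, ⟨x, hxs⟩, hsy⟩
      · rintro ⟨s, ⟨x, hxs⟩, hsy⟩; exact ⟨x, s, hxs, hsy⟩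
    rw [rank, hset]
  have hUeqI : U = I := by
    apply Set.eq_of_subset_of_ncard_le hUI _ (Set.toFinite I)
    rw [← hUrank, h]
    exact le_of_eq rfl
  have hT : {y | ∃ s ∈ S, f s = some y} = S := by
    ext y
    constructor
    · rintro ⟨s, hsS, hsy⟩
      rw [hf] at hsy
      simp only [pcomp, ofPerm, hb] at hsy
      obtain ⟨a, ha, ha2⟩ := hsy
      have : a ∈ I := hUeqI ▸ ⟨s, hsS, ha⟩
      rw [hSg]
      exact ⟨a, this, Option.some_injective _ ha2⟩
    · intro hy
      rw [hSg] at hy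
      obtain ⟨a, haI, rfl⟩ := hy
      have : a ∈ U := hUeqI.symm ▸ haI
      obtain ⟨s, hsS, hsa⟩ := this
      exact ⟨s, hsS, by simp [hf, pcomp, ofPerm, hsa]; rfl⟩
  have key : ∀ m : ℕ, {y | ∃ x, ppow f (m + 1) x = some y} = S := by
    intro m
    induction m with
    | zero =>
      ext y
      simp only [Set.mem_setOf_eq, ppow, pcomp, Option.bind_some, hS]
      exact Iff.rfl
    | succ k ih =>
      rw [← hT]
      ext y
      constructor
      · rintro ⟨x, hx⟩
        rw [show ppow f (k+1+1) = pcomp (ppow f (k+1)) f from rfl] at hx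
        simp only [pcomp, hb] at hx
        obtain ⟨s, hxs, hsy⟩ := hx
        exact ⟨s, ih ▸ ⟨x, hxs⟩, hsy⟩
      · rintro ⟨s, hsS, hsy⟩
        obtain ⟨x, hxs⟩ := ih.symm ▸ hsS
        refine ⟨x, ?_⟩
        rw [show ppow f (k+1+1) = pcomp (ppow f (k+1)) f from rfl]
        simp [pcomp, hxs, hsy]
        exact hsy
  intro m hm
  obtain ⟨k, rfl⟩ := Nat.exists_eq_add_of_le hm
  have : rank (ppow f (1 + k)) = S.ncard := by
    unfold rank
    rw [Nat.add_comm 1 k, key k]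
  rw [this, hSI]
  rfl
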